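/- For every graph polynomial P with integer coefficients there exists a graph polynomial Q, d.p.-equivalent to P, such that for every graph G all coefficients of Q(G;X) are nonnegative integers. Explicitly, writing P(G;X) = ∑_i h_i(G) X^i, one may take Q(G;X) = ∑_i g_i(G) X^i where g_{2i}(G) = h_i(G) and g_{2i−1}(G) = 0 if h_i(G) ≥ 0, and g_{2i−1}(G) = |h_i(G)| and g_{2i}(G) = 0 if h_i(G) < 0. -/

import Mathlib

open Polynomial

noncomputable def numEdges {n : ℕ} (G : SimpleGraph (Fin n)) : ℕ := G.edgeSet.ncard

noncomputable def numComponents {n : ℕ} (G : SimpleGraph (Fin n)) : ℕ :=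
  Nat.card G.ConnectedComponent

def GraphSimilar {n₁ n₂ : ℕ} (G₁ : SimpleGraph (Fin n₁)) (G₂ : SimpleGraph (Fin n₂)) : Prop :=
  n₁ = n₂ ∧ numEdges G₁ = numEdges G₂ ∧ numComponents G₁ = numComponents G₂

def IsGraphPolynomial (P : ∀ n : ℕ, SimpleGraph (Fin n) → Polynomial ℤ) : Prop :=
  ∀ (n : ℕ) (G H : SimpleGraph (Fin n)), Nonempty (G ≃g H) → P n G = P n H

def DPEquiv (P Q : ∀ n : ℕ, SimpleGraph (Fin n) → Polynomial ℤ) : Prop :=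
  ∀ (n₁ n₂ : ℕ) (G₁ : SimpleGraph (Fin n₁)) (G₂ : SimpleGraph (Fin n₂)),
    GraphSimilar G₁ G₂ → (P n₁ G₁ = P n₂ G₂ ↔ Q n₁ G₁ = Q n₂ G₂)


noncomputable def spread (p : Polynomial ℤ) : Polynomial ℤ :=
  ∑ i ∈ p.support,
    (C (max (p.coeff i) 0) * X ^ (2 * i) + C (max (-p.coeff i) 0) * X ^ (2 * i + 1))

lemma spread_coeff_even (p : Polynomial ℤ) (k : ℕ) :
    (spread p).coeff (2 * k) = max (p.coeff k) 0 := by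
  unfold spread
  rw [finset_sum_coeff]
  simp only [coeff_add, coeff_C_mul, coeff_X_pow]
  have : ∀ i ∈ p.support,
      max (p.coeff i) 0 * (if 2 * k = 2 * i then (1:ℤ) else 0) +
        max (-p.coeff i) 0 * (if 2 * k = 2 * i + 1 then (1:ℤ) else 0)
      = if i = k then max (p.coeff k) 0 else 0 := by
    intro i _
    by_cases h : i = k
    · subst h; simp [show ¬(2*i = 2*i+1) by omega]
    · simp [show ¬(2*k = 2*i) by omega, show ¬(2*k = 2*i+1) by omega, h]
  rw [Finset.sum_congr rfl this, Finset.sum_ite_eq' p.support k]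
  by_cases hk : k ∈ p.support
  · simp [hk]
  · simp [hk, Polynomial.notMem_support_iff.mp hk]

lemma spread_coeff_odd (p : Polynomial ℤ) (k : ℕ) :
    (spread p).coeff (2 * k + 1) = max (-p.coeff k) 0 := by
  unfold spread
  rw [finset_sum_coeff]
  simp only [coeff_add, coeff_C_mul, coeff_X_pow]
  have : ∀ i ∈ p.support,
      max (p.coeff i) 0 * (if 2 * k + 1 = 2 * i then (1:ℤ) else 0) +
        max (-p.coeff i) 0 * (if 2 * k + 1 = 2 * i + 1 then (1:ℤ) else 0)
      = if i = k then max (-p.coeff k) 0 else 0 := by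
    intro i _
    by_cases h : i = k
    · subst h; simp [show ¬(2*i+1 = 2*i) by omega]
    · simp [show ¬(2*k+1 = 2*i) by omega, show ¬(2*k+1 = 2*i+1) by omega, h, Ne.symm h]
  rw [Finset.sum_congr rfl this, Finset.sum_ite_eq' p.support k]
  by_cases hk : k ∈ p.support
  · simp [hk]
  · simp [hk, Polynomial.notMem_support_iff.mp hk]

lemma spread_injective : Function.Injective spread := by
  intro p q h
  ext k
  have h1 := congrArg (fun r => Polynomial.coeff r (2 * k)) h
  have h2 := congrArg (fun r => Polynomial.coeff r (2 * k + 1)) h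
  simp only [spread_coeff_even, spread_coeff_odd] at h1 h2
  omega

lemma spread_coeff_nonneg (p : Polynomial ℤ) (j : ℕ) : 0 ≤ (spread p).coeff j := by
  rcases Nat.even_or_odd j with ⟨k, hk⟩ | ⟨k, hk⟩
  · rw [show j = 2 * k by omega, spread_coeff_even]; exact le_max_right _ _
  · rw [show j = 2 * k + 1 by omega, spread_coeff_odd]; exact le_max_right _ _

/-- For every graph polynomial P with integer coefficients there is a
d.p.-equivalent graph polynomial Q all of whose coefficients are nonnegative integers
(obtained by spreading the positive and negative parts of the coefficients of P over even
and odd positions, respectively). -/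
theorem stmt_8 (P : ∀ n : ℕ, SimpleGraph (Fin n) → Polynomial ℤ)
    (hP : IsGraphPolynomial P) :
    ∃ Q : ∀ n : ℕ, SimpleGraph (Fin n) → Polynomial ℤ,
      IsGraphPolynomial Q ∧ DPEquiv P Q ∧
      ∀ (n : ℕ) (G : SimpleGraph (Fin n)) (i : ℕ), 0 ≤ (Q n G).coeff i := by
  refine ⟨fun n G => spread (P n G), fun n G H h => by simp only []; rw [hP n G H h], fun n₁ n₂ G₁ G₂ _ => ?_,
    fun n G i => spread_coeff_nonneg _ _⟩
  exact ⟨fun h => by simp only []; rw [h], fun h => spread_injective h⟩
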